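/- For every path formation of 16 teams into four play-off paths of four teams each, there exists a fair path formation of the same 16 teams that can be reached from it by a finite sequence of exchanges, where each exchange swaps a group winner i with a non-group winner j of the same league lying in a different path such that, in the formation before the exchange, the path of team i is more difficult than the path of team j. In particular, a fair path formation (one in which no group winner is in a more difficult play-off path than any non-group winner of the same league) always exists. -/

import Mathlib

/-- Teams are numbered 1–55. The hierarchy of eight levels, from strongest (0)
to weakest (7): 1–4, 5–12, 13–16, 17–24, 25–28, 29–39, 40–43, 44–55. -/
def level (t : ℕ) : ℕ :=
  if t ≤ 4 then 0 else if t ≤ 12 then 1 else if t ≤ 16 then 2 else if t ≤ 24 then 3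
  else if t ≤ 28 then 4 else if t ≤ 39 then 5 else if t ≤ 43 then 6 else 7

/-- League A (0) consists of teams 1–12, League B (1) of 13–24, League C (2) of 25–39,
League D (3) of 40–55; a smaller league index means a higher-ranked league. -/
def league (t : ℕ) : ℕ :=
  if t ≤ 12 then 0 else if t ≤ 24 then 1 else if t ≤ 39 then 2 else 3

/-- The group winners are teams 1–4, 13–16, 25–28 and 40–43. -/
def GroupWinner (t : ℕ) : Prop :=
  t ∈ ({1, 2, 3, 4, 13, 14, 15, 16, 25, 26, 27, 28, 40, 41, 42, 43} : Finset ℕ)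

/-- Team `i` is stronger than team `j` (i ≻ j): `i`'s level is strictly stronger. -/
def Stronger (i j : ℕ) : Prop := level i < level j

/-- Team `i` is at least as strong as team `j` (i ⪰ j). -/
def StrongerEq (i j : ℕ) : Prop := level i ≤ level j

/-- Within a path `P`, the two teams with the smallest numbers play their
semifinal at home. -/
def PlaysHome (P : Finset ℕ) (k : ℕ) : Prop := (P.filter (fun m => m < k)).card ≤ 1

/-- The opponents of team `k` in path `P` are `a < b < c`. -/
def OppSorted (P : Finset ℕ) (k a b c : ℕ) : Prop :=
  P \ {k} = {a, b, c} ∧ a < b ∧ b < c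

/-- Condition (i) of the difficulty definition: `i1 ⪰ j1`, `i2 ⪰ j2` and `i3 ⪰ j3`,
with `im ≻ jm` for at least one `m`. -/
def Cond1 (P : Finset ℕ) (i : ℕ) (Q : Finset ℕ) (j : ℕ) : Prop :=
  ∃ i1 i2 i3 j1 j2 j3, OppSorted P i i1 i2 i3 ∧ OppSorted Q j j1 j2 j3 ∧
    StrongerEq i1 j1 ∧ StrongerEq i2 j2 ∧ StrongerEq i3 j3 ∧
    (Stronger i1 j1 ∨ Stronger i2 j2 ∨ Stronger i3 j3)

/-- Condition (ii) of the difficulty definition: `i1 ≻ j1`. -/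
def Cond2 (P : Finset ℕ) (i : ℕ) (Q : Finset ℕ) (j : ℕ) : Prop :=
  ∃ i1 i2 i3 j1 j2 j3, OppSorted P i i1 i2 i3 ∧ OppSorted Q j j1 j2 j3 ∧
    Stronger i1 j1

/-- The path `P` of team `i` is more difficult than the path `Q` of team `j`:
condition (i) or condition (ii) holds, and it is not the case that team `i`
plays at home while team `j` plays away in the semifinals. -/
def MoreDifficult (P : Finset ℕ) (i : ℕ) (Q : Finset ℕ) (j : ℕ) : Prop :=
  (Cond1 P i Q j ∨ Cond2 P i Q j) ∧ ¬(PlaysHome P i ∧ ¬PlaysHome Q j)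

/-- A path formation: four pairwise disjoint play-off paths of four teams each,
the teams being numbered 1–55. -/
def IsFormation (path : Fin 4 → Finset ℕ) : Prop :=
  (∀ p, ∀ t ∈ path p, 1 ≤ t ∧ t ≤ 55) ∧ (∀ p, (path p).card = 4) ∧
    (∀ p q, p ≠ q → Disjoint (path p) (path q))

/-- The 16 teams of a path formation. -/
def teams (path : Fin 4 → Finset ℕ) : Finset ℕ := path 0 ∪ path 1 ∪ path 2 ∪ path 3

/-- Article 16.03: (a) no group winner is in a path containing a team from a
higher-ranked league, and (b) for every league from which four or more of the 16
teams come, some path consists of four teams of that league. -/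
def Satisfies1603 (path : Fin 4 → Finset ℕ) : Prop :=
  (∀ p, ∀ i ∈ path p, GroupWinner i → ∀ u ∈ path p, league i ≤ league u) ∧
  (∀ L : ℕ, 4 ≤ ((teams path).filter (fun t => league t = L)).card →
    ∃ p, ∀ t ∈ path p, league t = L)

/-- A path formation is unfair if some group winner is in a more difficult path
than some non-group winner of the same league. -/
def Unfair (path : Fin 4 → Finset ℕ) : Prop :=
  ∃ p q : Fin 4, p ≠ q ∧ ∃ i ∈ path p, ∃ j ∈ path q,
    GroupWinner i ∧ ¬GroupWinner j ∧ league i = league j ∧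
    MoreDifficult (path p) i (path q) j

/-- One exchange step: swap a group winner `i` with a non-group winner `j` of the
same league lying in a different path, provided that (in the formation before the
exchange) the path of team `i` is more difficult than the path of team `j`. -/
def SwapStep (path path' : Fin 4 → Finset ℕ) : Prop :=
  ∃ (p q : Fin 4) (i j : ℕ), p ≠ q ∧ i ∈ path p ∧ j ∈ path q ∧
    GroupWinner i ∧ ¬GroupWinner j ∧ league i = league j ∧
    MoreDifficult (path p) i (path q) j ∧
    path' = fun r =>
      if r = p then insert j (path p \ {i})
      else if r = q then insert i (path q \ {j})
      else path r


/-! ### Auxiliary machinery -/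

section Aux

lemma level_le7 (t : ℕ) : level t ≤ 7 := by
  unfold level; split_ifs <;> omega

set_option maxHeartbeats 1000000 in
lemma level_mono {s t : ℕ} (h : s ≤ t) : level s ≤ level t := by
  unfold level; split_ifs <;> omega

/-- Strength weight: `4 ^ (7 - level t)`. -/
def chi (t : ℕ) : ℕ := 4 ^ (7 - level t)

lemma chi_pos (t : ℕ) : 0 < chi t := Nat.pow_pos (by norm_num)

lemma chi_le {s t : ℕ} (h : level s ≤ level t) : chi t ≤ chi s :=
  Nat.pow_le_pow_right (by norm_num) (Nat.sub_le_sub_left h 7)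

lemma chi_lt {s t : ℕ} (h : level s < level t) : chi t < chi s := by
  have h7 := level_le7 t
  exact Nat.pow_lt_pow_right (by norm_num) (by omega)

/-- Boolean version of `GroupWinner`. -/
def GWb (t : ℕ) : Bool := t ∈ [1,2,3,4,13,14,15,16,25,26,27,28,40,41,42,43]

lemma gw_iff (t : ℕ) : GroupWinner t ↔ GWb t = true := by
  simp [GroupWinner, GWb]

lemma winner_level_lt_aux : ∀ i < 56, ∀ j < 56,
    (1 ≤ j ∧ GWb i = true ∧ GWb j = false ∧ league i = league j) →
    level i < level j := by decide

lemma winner_level_lt {i j : ℕ} (hj1 : 1 ≤ j) (hj2 : j ≤ 55)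
    (hwi : GroupWinner i) (hwj : ¬GroupWinner j) (hlg : league i = league j) :
    level i < level j := by
  rw [gw_iff] at hwi hwj
  have hi56 : i < 56 := by unfold GWb at hwi; simp at hwi; omega
  exact winner_level_lt_aux i hi56 j (by omega) ⟨hj1, hwi, by simpa using hwj, hlg⟩

/-- Sum of strength weights of a path. -/
def pathSum (P : Finset ℕ) : ℕ := ∑ t ∈ P, chi t

lemma pathSum_opp {P : Finset ℕ} {k a b c : ℕ} (h : OppSorted P k a b c) :
    pathSum (P \ {k}) = chi a + chi b + chi c := by
  obtain ⟨hP, hab, hbc⟩ := h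
  rw [pathSum, hP, Finset.sum_insert (by simp; omega),
    Finset.sum_insert (by simp; omega), Finset.sum_singleton]
  ring

lemma opp_lt {P Q : Finset ℕ} {i j : ℕ}
    (h : Cond1 P i Q j ∨ Cond2 P i Q j) :
    pathSum (Q \ {j}) < pathSum (P \ {i}) := by
  rcases h with ⟨i1,i2,i3,j1,j2,j3,hoi,hoj,h1,h2,h3,hs⟩ |
    ⟨i1,i2,i3,j1,j2,j3,hoi,hoj,h1⟩
  · rw [pathSum_opp hoi, pathSum_opp hoj]
    have e1 : chi j1 ≤ chi i1 := chi_le h1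
    have e2 : chi j2 ≤ chi i2 := chi_le h2
    have e3 : chi j3 ≤ chi i3 := chi_le h3
    rcases hs with hs | hs | hs
    · have := chi_lt hs; omega
    · have := chi_lt hs; omega
    · have := chi_lt hs; omega
  · rw [pathSum_opp hoi, pathSum_opp hoj]
    have h1' : level i1 < level j1 := h1
    have hm2 : level j1 ≤ level j2 := level_mono (le_of_lt hoj.2.1)
    have hm3 : level j1 ≤ level j3 :=
      level_mono (by have := hoj.2.1; have := hoj.2.2; omega)
    have hj2 : chi j2 ≤ chi j1 := chi_le hm2
    have hj3 : chi j3 ≤ chi j1 := chi_le hm3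
    have hl7 := level_le7 j1
    have hle : chi j1 ≤ 4 ^ (6 - level i1) :=
      Nat.pow_le_pow_right (by norm_num) (by omega)
    have heq : chi i1 = 4 * 4 ^ (6 - level i1) := by
      unfold chi
      rw [show 7 - level i1 = (6 - level i1) + 1 by omega]
      ring
    have hpos : 0 < 4 ^ (6 - level i1) := Nat.pow_pos (by norm_num)
    have hp2 := chi_pos i2
    have hp3 := chi_pos i3
    omega

lemma mem_teams {f : Fin 4 → Finset ℕ} {t : ℕ} : t ∈ teams f ↔ ∃ r, t ∈ f r := by
  simp only [teams, Finset.mem_union]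
  constructor
  · rintro (((h | h) | h) | h)
    exacts [⟨0, h⟩, ⟨1, h⟩, ⟨2, h⟩, ⟨3, h⟩]
  · rintro ⟨r, hr⟩
    fin_cases r
    · exact Or.inl (Or.inl (Or.inl hr))
    · exact Or.inl (Or.inl (Or.inr hr))
    · exact Or.inl (Or.inr hr)
    · exact Or.inr hr

lemma image_swap_of_mem {s : Finset ℕ} {i j : ℕ} (hi : i ∈ s) (hj : j ∉ s) :
    s.image (Equiv.swap i j) = insert j (s \ {i}) := by
  ext t
  simp only [Finset.mem_image, Finset.mem_insert, Finset.mem_sdiff,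
    Finset.mem_singleton]
  constructor
  · rintro ⟨a, ha, rfl⟩
    rcases eq_or_ne a i with rfl | hai
    · exact Or.inl (Equiv.swap_apply_left a j)
    · rcases eq_or_ne a j with rfl | haj
      · exact absurd ha hj
      · rw [Equiv.swap_apply_of_ne_of_ne hai haj]
        exact Or.inr ⟨ha, hai⟩
  · rintro (rfl | ⟨ha, hai⟩)
    · exact ⟨i, hi, Equiv.swap_apply_left i t⟩
    · exact ⟨t, ha, Equiv.swap_apply_of_ne_of_ne hai (fun h => hj (h ▸ ha))⟩

lemma image_swap_of_not_mem {s : Finset ℕ} {i j : ℕ} (hi : i ∉ s) (hj : j ∉ s) :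
    s.image (Equiv.swap i j) = s := by
  have h : ∀ a ∈ s, Equiv.swap i j a = a := fun a ha =>
    Equiv.swap_apply_of_ne_of_ne (fun h => hi (h ▸ ha)) (fun h => hj (h ▸ ha))
  calc s.image (Equiv.swap i j) = s.image id :=
        Finset.image_congr (fun a ha => h a ha)
    _ = s := Finset.image_id

lemma image_swap_self {s : Finset ℕ} {i j : ℕ} (hi : i ∈ s) (hj : j ∈ s) :
    s.image (Equiv.swap i j) = s := by
  apply Finset.eq_of_subset_of_card_le
  · intro t ht
    obtain ⟨a, ha, rfl⟩ := Finset.mem_image.mp ht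
    rw [Equiv.swap_apply_def]
    split_ifs <;> assumption
  · rw [Finset.card_image_of_injective _ (Equiv.swap i j).injective]

/-- The potential function. -/
def pot (f : Fin 4 → Finset ℕ) : ℕ := ∑ r, (pathSum (f r)) ^ 2

lemma swap_of_unfair {path : Fin 4 → Finset ℕ} (hF : IsFormation path)
    (hU : Unfair path) :
    ∃ path', SwapStep path path' ∧ IsFormation path' ∧
      teams path' = teams path ∧ pot path' < pot path := by
  obtain ⟨p, q, hpq, i, hi, j, hj, hwi, hwj, hlg, hMD⟩ := hU
  obtain ⟨hbound, hcard, hdis⟩ := hF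
  have hij : i ≠ j := fun h => hwj (h ▸ hwi)
  have hjp : j ∉ path p := Finset.disjoint_right.mp (hdis p q hpq) hj
  have hiq : i ∉ path q := Finset.disjoint_left.mp (hdis p q hpq) hi
  have hjb := hbound q j hj
  have hib := hbound p i hi
  have hlev : level i < level j := winner_level_lt hjb.1 hjb.2 hwi hwj hlg
  have hchi : chi j < chi i := chi_lt hlev
  have hab : pathSum (path q \ {j}) < pathSum (path p \ {i}) := opp_lt hMD.1
  have hjA : j ∉ path p \ {i} := fun h => hjp (Finset.mem_sdiff.mp h).1
  have hiB : i ∉ path q \ {j} := fun h => hiq (Finset.mem_sdiff.mp h).1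
  have himg : ∀ r : Fin 4,
      (if r = p then insert j (path p \ {i})
        else if r = q then insert i (path q \ {j}) else path r)
        = (path r).image (Equiv.swap i j) := by
    intro r
    by_cases hrp : r = p
    · subst hrp
      rw [if_pos rfl, image_swap_of_mem hi hjp]
    · by_cases hrq : r = q
      · subst hrq
        rw [if_neg hrp, if_pos rfl, Equiv.swap_comm, image_swap_of_mem hj hiq]
      · rw [if_neg hrp, if_neg hrq,
          image_swap_of_not_mem (Finset.disjoint_left.mp (hdis p r (fun h => hrp h.symm)) hi)
            (Finset.disjoint_left.mp (hdis q r (fun h => hrq h.symm)) hj)]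
  refine ⟨fun r => if r = p then insert j (path p \ {i})
      else if r = q then insert i (path q \ {j}) else path r,
    ⟨p, q, i, j, hpq, hi, hj, hwi, hwj, hlg, hMD, rfl⟩, ?_, ?_, ?_⟩
  · -- IsFormation
    refine ⟨?_, ?_, ?_⟩
    · intro r t ht
      simp only [himg] at ht
      obtain ⟨a, ha, rfl⟩ := Finset.mem_image.mp ht
      have hba := hbound r a ha
      rw [Equiv.swap_apply_def]
      split_ifs <;> omega
    · intro r
      simp only [himg, Finset.card_image_of_injective _ (Equiv.swap i j).injective]
      exact hcard r
    · intro r s hrs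
      simp only [himg]
      exact (Finset.disjoint_image (Equiv.swap i j).injective).mpr (hdis r s hrs)
  · -- teams preserved
    have hiT : i ∈ teams path := mem_teams.mpr ⟨p, hi⟩
    have hjT : j ∈ teams path := mem_teams.mpr ⟨q, hj⟩
    have : teams (fun r => if r = p then insert j (path p \ {i})
        else if r = q then insert i (path q \ {j}) else path r)
        = (teams path).image (Equiv.swap i j) := by
      simp only [teams, himg, Finset.image_union]
    rw [this, image_swap_self hiT hjT]
  · -- potential decreases
    have hsplit : ∀ g : Fin 4 → Finset ℕ, pot g =
        (pathSum (g p)) ^ 2 + (pathSum (g q)) ^ 2 +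
          ∑ r ∈ ({p, q} : Finset (Fin 4))ᶜ, (pathSum (g r)) ^ 2 := by
      intro g
      rw [pot, ← Finset.sum_add_sum_compl ({p, q} : Finset (Fin 4)),
        Finset.sum_pair hpq]
    rw [hsplit, hsplit]
    have hcompl : ∑ r ∈ ({p, q} : Finset (Fin 4))ᶜ,
        (pathSum (if r = p then insert j (path p \ {i})
          else if r = q then insert i (path q \ {j}) else path r)) ^ 2
        = ∑ r ∈ ({p, q} : Finset (Fin 4))ᶜ, (pathSum (path r)) ^ 2 := by
      refine Finset.sum_congr rfl (fun r hr => ?_)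
      rw [Finset.mem_compl, Finset.mem_insert, Finset.mem_singleton] at hr
      push_neg at hr
      rw [if_neg hr.1, if_neg hr.2]
    rw [hcompl]
    have hp' : pathSum (if p = p then insert j (path p \ {i})
        else if p = q then insert i (path q \ {j}) else path p)
        = chi j + pathSum (path p \ {i}) := by
      rw [if_pos rfl, pathSum, Finset.sum_insert hjA]; rfl
    have hq' : pathSum (if q = p then insert j (path p \ {i})
        else if q = q then insert i (path q \ {j}) else path q)
        = chi i + pathSum (path q \ {j}) := by
      rw [if_neg (Ne.symm hpq), if_pos rfl, pathSum, Finset.sum_insert hiB]; rfl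
    have hpold : pathSum (path p) = chi i + pathSum (path p \ {i}) := by
      conv_lhs => rw [show path p = insert i (path p \ {i}) by
        rw [Finset.sdiff_singleton_eq_erase, Finset.insert_erase hi]]
      rw [pathSum, Finset.sum_insert (by simp)]; rfl
    have hqold : pathSum (path q) = chi j + pathSum (path q \ {j}) := by
      conv_lhs => rw [show path q = insert j (path q \ {j}) by
        rw [Finset.sdiff_singleton_eq_erase, Finset.insert_erase hj]]
      rw [pathSum, Finset.sum_insert (by simp)]; rfl
    rw [hp', hq', hpold, hqold]
    set a := pathSum (path p \ {i})
    set b := pathSum (path q \ {j})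
    have key : ∀ u v a b : ℕ, v < u → b < a →
        (v + a) ^ 2 + (u + b) ^ 2 < (u + a) ^ 2 + (v + b) ^ 2 := by
      intro u v a b h1 h2
      nlinarith [h1, h2]
    have := key (chi i) (chi j) a b hchi hab
    omega

/-- Main induction on the potential. -/
lemma fair_aux : ∀ n (path : Fin 4 → Finset ℕ), IsFormation path → pot path ≤ n →
    ∃ path', Relation.ReflTransGen SwapStep path path' ∧
      teams path' = teams path ∧ ¬Unfair path' := by
  intro n
  induction n with
  | zero =>
    intro path hF hle
    by_cases h : Unfair path
    · obtain ⟨path'', -, -, -, hlt⟩ := swap_of_unfair hF h; omega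
    · exact ⟨path, Relation.ReflTransGen.refl, rfl, h⟩
  | succ n ih =>
    intro path hF hle
    by_cases h : Unfair path
    · obtain ⟨path'', hstep, hF'', hteams, hlt⟩ := swap_of_unfair hF h
      obtain ⟨path', h1, h2, h3⟩ := ih path'' hF'' (by omega)
      exact ⟨path', Relation.ReflTransGen.head hstep h1, h2.trans hteams, h3⟩
    · exact ⟨path, Relation.ReflTransGen.refl, rfl, h⟩

end Aux
/-- For every path formation of 16 teams into four play-off
paths of four teams each, there exists a fair path formation of the same 16
teams that can be reached from it by a finite sequence of exchanges, where each
exchange swaps a group winner `i` with a non-group winner `j` of the same league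
lying in a different path such that, in the formation before the exchange, the
path of team `i` is more difficult than the path of team `j`. In particular, a
fair path formation (one in which no group winner is in a more difficult
play-off path than any non-group winner of the same league) always exists. -/
theorem fair_formation_reachable (path : Fin 4 → Finset ℕ)
    (hF : IsFormation path) :
    ∃ path' : Fin 4 → Finset ℕ,
      Relation.ReflTransGen SwapStep path path' ∧
      teams path' = teams path ∧ ¬Unfair path' := by
  exact fair_aux (pot path) path hF le_rfl
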